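/- Let λ be an uncountable regular cardinal, S a subset of { x < λ : cf(x) = ω } that is stationary in λ, and α a countable ordinal. Then S has a subset order-homeomorphic to α. -/

import Mathlib

open Set Ordinal
open scoped Cardinal

noncomputable section

namespace Ordinal

/-- Natural (Hessenberg) addition, as formerly defined in Mathlib. -/
def nadd : Ordinal.{0} → Ordinal.{0} → Ordinal.{0}
  | a, b =>
    max (blsub.{0, 0} a fun a' _ => nadd a' b) (blsub.{0, 0} b fun b' _ => nadd a b')
termination_by a b => (a, b)

end Ordinal

infixl:65 " ♯ " => Ordinal.nadd

/-- Derived set (non-isolated points) of a set of ordinals, as a subspace. -/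
def deriv' (s : Set Ordinal.{0}) : Set Ordinal.{0} := {x ∈ s | x ∈ closure (s \ {x})}

/-- Iterated Cantor–Bendixson derivative. -/
def iterDeriv (s : Set Ordinal.{0}) (o : Ordinal.{0}) : Set Ordinal.{0} :=
  Ordinal.limitRecOn o s (fun _ ih => deriv' ih) (fun o _ ih => ⋂ (p : Ordinal.{0}) (h : p < o), ih p h)

/-- `s` contains a homeomorphic copy of the ordinal `α` (with its order topology). -/
def HomeoCopy (α : Ordinal.{0}) (s : Set Ordinal.{0}) : Prop :=
  ∃ t : Set Ordinal, t ⊆ s ∧ Nonempty ((Iio α : Set Ordinal.{0}) ≃ₜ t)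

/-- Two ordinals are biembeddable: each is homeomorphic to a subspace of the other. -/
def Biembed (α β : Ordinal.{0}) : Prop := HomeoCopy α (Iio β) ∧ HomeoCopy β (Iio α)

/-- Two sets of ordinals are order-homeomorphic: there is an order-preserving homeomorphism. -/
def OrderHomeo (X Y : Set Ordinal.{0}) : Prop :=
  ∃ e : X ≃ₜ Y, ∀ a b : X, a ≤ b ↔ e a ≤ e b

/-- An ordinal is order-reinforcing. -/
def OrderReinforcing (α : Ordinal.{0}) : Prop :=
  ∀ X : Set Ordinal, Nonempty ((Iio α : Set Ordinal.{0}) ≃ₜ X) → ∃ Y ⊆ X, OrderHomeo (Iio α) Y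

/-- The Cantor–Bendixson rank of an ordinal: the least exponent in its Cantor normal form. -/
def CB (x : Ordinal.{0}) : Ordinal := if x = 0 then 0 else sSup {γ | (ω : Ordinal.{0}) ^ γ ∣ x}

/-- The natural (Hessenberg) sum of a finite family of ordinals. -/
def natSumFam {k : ℕ} (α : Fin k → Ordinal.{0}) : Ordinal := (List.ofFn α).foldr (· ♯ ·) 0

/-- The Milner–Rado sum of a finite family of ordinals. -/
def mrSumFam {k : ℕ} (α : Fin k → Ordinal.{0}) : Ordinal :=
  sInf {δ | ∀ β : Fin k → Ordinal, (∀ i, β i < α i) → δ ≠ natSumFam β}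

/-- The topological pigeonhole relation `β → (top α i)¹` for finitely many colours. -/
def TopPH {k : ℕ} (β : Ordinal.{0}) (α : Fin k → Ordinal.{0}) : Prop :=
  ∀ c : Ordinal → Fin k, ∃ i, HomeoCopy (α i) (Iio β ∩ c ⁻¹' {i})

/-- The topological pigeonhole relation with an arbitrary index type of colours. -/
def TopPHFam {ι : Type*} (β : Ordinal.{0}) (α : ι → Ordinal.{0}) : Prop :=
  ∀ c : Ordinal → ι, ∃ i, HomeoCopy (α i) (Iio β ∩ c ⁻¹' {i})

/-- `ω̄[γ, m]`: `ω ^ γ * m + 1` if `γ > 0`, and `m` if `γ = 0`. -/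
def obar (γ : Ordinal.{0}) (m : ℕ) : Ordinal := if γ = 0 then (m : Ordinal.{0}) else ω ^ γ * m + 1

/-- `C` is closed and unbounded in `o`. -/
def IsClubIn (C : Set Ordinal.{0}) (o : Ordinal.{0}) : Prop :=
  C ⊆ Iio o ∧ (∀ x < o, ∃ y ∈ C, x ≤ y) ∧
    ∀ x < o, x ≠ 0 → (∀ y < x, ∃ z ∈ C, y < z ∧ z < x) → x ∈ C

/-- `S` is stationary in `o`: it meets every club subset of `o`. -/
def StationaryIn (S : Set Ordinal.{0}) (o : Ordinal.{0}) : Prop :=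
  ∀ C, IsClubIn C o → (S ∩ C).Nonempty


section
open Topology Filter




namespace Fried

variable {o : Ordinal.{0}}

lemma sup_seq_lt (hcof : ℵ₀ < o.cof) {g : ℕ → Ordinal.{0}} (hg : ∀ n, g n < o) :
    sSup (Set.range g) < o := by
  have h : #ℕ < o.cof := by rwa [Cardinal.mk_nat]
  have := Ordinal.iSup_lt_ord (f := g) h hg
  simpa [iSup] using this

lemma exists_sup_point (ho : Order.IsSuccLimit o) (hcof : ℵ₀ < o.cof) (P : ℕ → Ordinal.{0} → Prop)
    (hP : ∀ n, ∀ x < o, ∃ z, P n z ∧ x < z ∧ z < o) {x : Ordinal} (hx : x < o) :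
    ∃ w, x < w ∧ w < o ∧ ∀ n, ∀ y < w, ∃ z, P n z ∧ y < z ∧ z < w := by
  choose c hc1 hc2 hc3 using hP
  set g : ℕ → {z : Ordinal.{0} // z < o} :=
    fun k => Nat.rec ⟨x, hx⟩ (fun k prev => ⟨c k.unpair.1 prev.1 prev.2, hc3 _ _ prev.2⟩) k with hg
  have gsucc : ∀ k, (g (k+1)).1 = c k.unpair.1 (g k).1 (g k).2 := fun k => rfl
  have gmono : ∀ k, (g k).1 < (g (k+1)).1 := by
    intro k; rw [gsucc]; exact hc2 _ _ (g k).2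
  have gmono' : StrictMono (fun k => (g k).1) := strictMono_nat_of_lt_succ gmono
  have hbdd : BddAbove (Set.range fun k => (g k).1) :=
    ⟨o, by rintro y ⟨k, rfl⟩; exact (g k).2.le⟩
  set w := sSup (Set.range fun k => (g k).1) with hw
  have hle : ∀ k, (g k).1 ≤ w := fun k => le_csSup hbdd ⟨k, rfl⟩
  have hltw : ∀ k, (g k).1 < w := fun k => lt_of_lt_of_le (gmono k) (hle (k+1))
  have hwo : w < o := sup_seq_lt hcof (fun k => (g k).2)
  refine ⟨w, hltw 0, hwo, ?_⟩
  intro n y hy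
  have hne : (Set.range fun k => (g k).1).Nonempty := ⟨(g 0).1, 0, rfl⟩
  obtain ⟨z, ⟨k, rfl⟩, hz⟩ := exists_lt_of_lt_csSup hne hy
  set k' := Nat.pair n k with hk'
  have hkk' : k ≤ k' := Nat.right_le_pair n k
  refine ⟨(g (k'+1)).1, ?_, ?_, hltw (k'+1)⟩
  · have := gsucc k'
    rw [hk'] at this ⊢
    rw [this, Nat.unpair_pair]
    exact hc1 _ _ _
  · exact lt_of_lt_of_le hz (le_trans (gmono'.monotone hkk') (gmono k').le)

lemma clubIn_limPts (ho : Order.IsSuccLimit o) (hcof : ℵ₀ < o.cof) {U : Set Ordinal.{0}}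
    (hU : ∀ x < o, ∃ z ∈ U, x < z ∧ z < o) :
    IsClubIn {x | x < o ∧ x ≠ 0 ∧ ∀ y < x, ∃ z ∈ U, y < z ∧ z < x} o := by
  refine ⟨fun x hx => hx.1, ?_, ?_⟩
  · intro x hx
    obtain ⟨w, hxw, hwo, h3⟩ := exists_sup_point ho hcof (fun _ z => z ∈ U)
      (fun _ x hx => by obtain ⟨z, hz, h⟩ := hU x hx; exact ⟨z, hz, h⟩) hx
    refine ⟨w, ⟨hwo, ?_, fun y hy => h3 0 y hy⟩, hxw.le⟩
    exact (pos_iff_ne_zero.1 (lt_of_le_of_lt ((zero_le (a := x))) hxw))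
  · intro x hxo hx0 hlp
    refine ⟨hxo, hx0, ?_⟩
    intro y hy
    obtain ⟨z, hz, hyz, hzx⟩ := hlp y hy
    obtain ⟨u, hu, hyu, huz⟩ := hz.2.2 y hyz
    exact ⟨u, hu, hyu, huz.trans hzx⟩

lemma clubIn_iInter (ho : Order.IsSuccLimit o) (hcof : ℵ₀ < o.cof) {D : ℕ → Set Ordinal.{0}}
    (hD : ∀ n, IsClubIn (D n) o) : IsClubIn (⋂ n, D n) o := by
  refine ⟨fun x hx => (hD 0).1 (Set.mem_iInter.1 hx 0), ?_, ?_⟩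
  · intro x hx
    have hP : ∀ n, ∀ x < o, ∃ z, z ∈ D n ∧ x < z ∧ z < o := by
      intro n x hx
      obtain ⟨z, hz, hxz⟩ := (hD n).2.1 (x+1) (by
        have := ho.succ_lt hx; rwa [Ordinal.add_one_eq_succ])
      exact ⟨z, hz, lt_of_lt_of_le (by rw [Ordinal.add_one_eq_succ]; exact Order.lt_succ x) hxz,
        (hD n).1 hz⟩
    obtain ⟨w, hxw, hwo, h3⟩ := exists_sup_point ho hcof (fun n z => z ∈ D n) hP hx
    refine ⟨w, Set.mem_iInter.2 fun n => ?_, hxw.le⟩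
    refine (hD n).2.2 w hwo ?_ ?_
    · exact pos_iff_ne_zero.1 (lt_of_le_of_lt ((zero_le (a := x))) hxw)
    · intro y hy
      obtain ⟨z, hz, h⟩ := h3 n y hy
      exact ⟨z, hz, h⟩
  · intro x hxo hx0 hlp
    refine Set.mem_iInter.2 fun n => (hD n).2.2 x hxo hx0 ?_
    intro y hy
    obtain ⟨z, hz, h⟩ := hlp y hy
    exact ⟨z, Set.mem_iInter.1 hz n, h⟩

lemma clubIn_inter (ho : Order.IsSuccLimit o) (hcof : ℵ₀ < o.cof) {C D : Set Ordinal.{0}}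
    (hC : IsClubIn C o) (hD : IsClubIn D o) : IsClubIn (C ∩ D) o := by
  have h := clubIn_iInter ho hcof (D := fun n => Nat.rec C (fun _ _ => D) n)
    (by intro n; cases n; exacts [hC, hD])
  have : (⋂ n, (fun n => Nat.rec C (fun _ _ => D) n : ℕ → Set Ordinal.{0}) n) = C ∩ D := by
    ext x
    simp only [Set.mem_iInter, Set.mem_inter_iff]
    constructor
    · intro h; exact ⟨h 0, h 1⟩
    · rintro ⟨h1, h2⟩ n; cases n; exacts [h1, h2]
  rwa [this] at h

lemma statIn_mono {S T : Set Ordinal.{0}} (h : S ⊆ T) (hS : StationaryIn S o) :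
    StationaryIn T o := fun C hC => by
  obtain ⟨x, hx1, hx2⟩ := hS C hC; exact ⟨x, h hx1, hx2⟩

lemma statIn_inter_club (ho : Order.IsSuccLimit o) (hcof : ℵ₀ < o.cof) {S C : Set Ordinal.{0}}
    (hS : StationaryIn S o) (hC : IsClubIn C o) : StationaryIn (S ∩ C) o := by
  intro D hD
  obtain ⟨x, hxS, hxCD⟩ := hS (C ∩ D) (clubIn_inter ho hcof hC hD)
  exact ⟨x, ⟨hxS, hxCD.1⟩, hxCD.2⟩

lemma statIn_unbounded (ho : Order.IsSuccLimit o) {S : Set Ordinal.{0}} (hS : StationaryIn S o) :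
    ∀ x < o, ∃ y ∈ S, x < y ∧ y < o := by
  intro x hx
  have hclub : IsClubIn {z | x < z ∧ z < o} o := by
    refine ⟨fun z hz => hz.2, ?_, ?_⟩
    · intro q hq
      have hx1 : x + 1 < o := by rw [Ordinal.add_one_eq_succ]; exact ho.succ_lt hx
      refine ⟨max (x+1) q, ⟨?_, max_lt hx1 hq⟩, le_max_right _ _⟩
      exact lt_of_lt_of_le (by rw [Ordinal.add_one_eq_succ]; exact Order.lt_succ x) (le_max_left _ _)
    · intro w hwo hw0 h3
      obtain ⟨z, hz, _, hzw⟩ := h3 0 (pos_iff_ne_zero.2 hw0)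
      exact ⟨hz.1.trans hzw, hwo⟩
  obtain ⟨y, hyS, hy⟩ := hS _ hclub
  exact ⟨y, hyS, hy.1, hy.2⟩




lemma exists_fund_seq {x : Ordinal.{0}} (hx : Order.IsSuccLimit x) (T : Set Ordinal.{0})
    (hTc : T.Countable) (hTsub : T ⊆ Iio x) (hTub : ∀ y < x, ∃ t ∈ T, y ≤ t) :
    ∃ b : ℕ → Ordinal.{0}, StrictMono b ∧ (∀ n, b n < x) ∧ ∀ y < x, ∃ n, y < b n := by
  obtain ⟨t0, ht0, _⟩ := hTub 0 hx.pos
  obtain ⟨h, hh⟩ := hTc.exists_eq_range ⟨t0, ht0⟩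
  have hhx : ∀ n, h n < x := fun n => hTsub (by rw [hh]; exact ⟨n, rfl⟩)
  set b : ℕ → Ordinal.{0} :=
    fun n => Nat.rec (h 0 + 1) (fun k prev => max prev (h (k+1)) + 1) n with hb
  have hbsucc : ∀ k, b (k+1) = max (b k) (h (k+1)) + 1 := fun k => rfl
  have hblt : ∀ n, b n < x := by
    intro n; induction n with
    | zero =>
      have := hx.succ_lt (hhx 0); rwa [← Ordinal.add_one_eq_succ] at this
    | succ k ih =>
      rw [hbsucc]
      have : max (b k) (h (k+1)) < x := max_lt ih (hhx (k+1))
      have := hx.succ_lt this; rwa [← Ordinal.add_one_eq_succ] at this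
  have hmono : StrictMono b := by
    apply strictMono_nat_of_lt_succ
    intro k; rw [hbsucc]
    calc b k ≤ max (b k) (h (k+1)) := le_max_left _ _
    _ < _ + 1 := by rw [Ordinal.add_one_eq_succ]; exact Order.lt_succ _
  have hhb : ∀ n, h n < b n := by
    intro n; cases n with
    | zero =>
      show h 0 < h 0 + 1
      rw [Ordinal.add_one_eq_succ]; exact Order.lt_succ _
    | succ k =>
      rw [hbsucc]
      calc h (k+1) ≤ max (b k) (h (k+1)) := le_max_right _ _
      _ < _ + 1 := by rw [Ordinal.add_one_eq_succ]; exact Order.lt_succ _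
  refine ⟨b, hmono, hblt, ?_⟩
  intro y hy
  obtain ⟨t, ht, hyt⟩ := hTub y hy
  rw [hh] at ht
  obtain ⟨n, rfl⟩ := ht
  exact ⟨n, lt_of_le_of_lt hyt (hhb n)⟩

lemma isLimit_of_cof_omega {x : Ordinal.{0}} (hcof : x.cof = ℵ₀) : Order.IsSuccLimit x :=
  Ordinal.aleph0_le_cof.1 (le_of_eq hcof.symm)

lemma exists_seq_of_cof_omega {x : Ordinal.{0}} (hcof : x.cof = ℵ₀) :
    ∃ b : ℕ → Ordinal.{0}, StrictMono b ∧ (∀ n, b n < x) ∧ ∀ y < x, ∃ n, y < b n := by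
  have hx : Order.IsSuccLimit x := isLimit_of_cof_omega hcof
  obtain ⟨ι, f, hlsub, hmk⟩ := Ordinal.exists_lsub_cof x
  rw [hcof] at hmk
  have : Countable ι := Cardinal.mk_le_aleph0_iff.1 hmk.le
  refine exists_fund_seq hx (Set.range f) (Set.countable_range f) ?_ ?_
  · rintro _ ⟨i, rfl⟩
    rw [← hlsub]; exact Ordinal.lt_lsub f i
  · intro y hy
    rw [← hlsub] at hy
    obtain ⟨i, hi⟩ := Ordinal.lt_lsub_iff.1 hy
    exact ⟨f i, ⟨i, rfl⟩, hi⟩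

lemma countable_Iio_of_lt_omega1 {α : Ordinal.{0}} (hα : α < ω₁) : (Iio α).Countable := by
  have h1 : α.card < ℵ₁ := by
    rw [← Cardinal.ord_aleph 1] at hα
    exact Cardinal.lt_ord.1 hα
  have h2 : α.card ≤ ℵ₀ := by
    rwa [← Cardinal.succ_aleph0, Order.lt_succ_iff] at h1
  rw [← Set.countable_coe_iff, ← Cardinal.mk_le_aleph0_iff, Cardinal.mk_Iio_ordinal]
  simpa using Cardinal.lift_le.{1}.2 h2




lemma lt_add_one_ord (x : Ordinal.{0}) : x < x + 1 := by
  rw [Ordinal.add_one_eq_succ]; exact Order.lt_succ x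

lemma le_of_lt_add_one {x y : Ordinal.{0}} (h : x < y + 1) : x ≤ y := by
  rwa [Ordinal.add_one_eq_succ, Order.lt_succ_iff] at h

lemma copy_orderHomeo {α : Ordinal.{0}} {f : Ordinal.{0} → Ordinal.{0}}
    (h1 : StrictMonoOn f (Iic α))
    (h2 : ∀ ξ < α, Order.IsSuccLimit ξ → f ξ = sSup (f '' Iio ξ)) :
    OrderHomeo (Iio α) (f '' Iio α) := by
  have hIic : Iio α ⊆ Iic α := Iio_subset_Iic_self
  have miic : ∀ {x : Ordinal.{0}}, x < α → x ∈ Iic α := fun hx => mem_Iic.2 hx.le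
  have m0 : (0 : Ordinal.{0}) ∈ Iic α := mem_Iic.2 ((zero_le (a := α)))
  have inj : InjOn f (Iio α) := (h1.injOn).mono hIic
  set e0 : ↥(Iio α) ≃ ↥(f '' Iio α) := Equiv.Set.imageOfInjOn f (Iio α) inj with he0
  have he0app : ∀ p : ↥(Iio α), (e0 p : Ordinal) = f p.1 := fun p => rfl
  have hsymm : ∀ (θ : Ordinal) (hθ : θ ∈ Iio α) (hmem : f θ ∈ f '' Iio α),
      e0.symm ⟨f θ, hmem⟩ = ⟨θ, hθ⟩ := by
    intro θ hθ hmem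
    rw [Equiv.symm_apply_eq]
    exact Subtype.ext rfl
  -- continuity of the forward map (into Ordinal)
  have cont1 : Continuous (fun p : ↥(Iio α) => f p.1) := by
    rw [continuous_iff_continuousAt]
    rintro ⟨ξ, hξα⟩
    by_cases hlim : Order.IsSuccLimit ξ
    · rw [ContinuousAt, Filter.tendsto_def]
      intro s hs
      have hlow : ∃ l, l < f ξ :=
        ⟨f 0, h1 m0 (miic hξα) hlim.pos⟩
      obtain ⟨a, b, ⟨haf, hfb⟩, hsub⟩ :=
        (mem_nhds_iff_exists_Ioo_subset' hlow ⟨f ξ + 1, lt_add_one_ord _⟩).1 hs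
      have hsup := h2 ξ hξα hlim
      have hne : (f '' Iio ξ).Nonempty := ⟨f 0, 0, hlim.pos, rfl⟩
      have haf' : a < sSup (f '' Iio ξ) := by rwa [← hsup]
      obtain ⟨_, ⟨η, hηξ, rfl⟩, haη⟩ := exists_lt_of_lt_csSup hne haf'
      have hV : (fun p : ↥(Iio α) => p.1) ⁻¹' (Ioo η (ξ + 1)) ∈ 𝓝 (⟨ξ, hξα⟩ : ↥(Iio α)) :=
        (isOpen_Ioo.preimage continuous_subtype_val).mem_nhds ⟨hηξ, lt_add_one_ord ξ⟩
      refine Filter.mem_of_superset hV ?_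
      rintro ⟨θ, hθα⟩ ⟨hηθ, hθξ⟩
      apply hsub
      have hθξ' : θ ≤ ξ := le_of_lt_add_one hθξ
      constructor
      · exact haη.trans (h1 (miic (hηξ.trans hξα)) (miic hθα) hηθ)
      · exact lt_of_le_of_lt (h1.monotoneOn (miic hθα) (miic hξα) hθξ') hfb
    · have hopen : IsOpen ({ξ} : Set Ordinal) := Ordinal.isOpen_singleton_iff.2 hlim
      have hVeq : (fun p : ↥(Iio α) => p.1) ⁻¹' ({ξ} : Set Ordinal)
          = {(⟨ξ, hξα⟩ : ↥(Iio α))} := by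
        ext ⟨y, hy⟩
        simp [Subtype.ext_iff]
      have hV : ({(⟨ξ, hξα⟩ : ↥(Iio α))} : Set ↥(Iio α)) ∈ 𝓝 (⟨ξ, hξα⟩ : ↥(Iio α)) := by
        rw [← hVeq]
        exact (hopen.preimage continuous_subtype_val).mem_nhds rfl
      have hpure : 𝓝 (⟨ξ, hξα⟩ : ↥(Iio α)) = pure ⟨ξ, hξα⟩ :=
        le_antisymm (Filter.le_pure_iff.2 hV) (pure_le_nhds _)
      rw [ContinuousAt, hpure]
      exact tendsto_pure_nhds _ _
  -- continuity of the inverse map (into Ordinal)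
  have cont2 : Continuous (fun q : ↥(f '' Iio α) => ((e0.symm q : ↥(Iio α)) : Ordinal)) := by
    rw [continuous_iff_continuousAt]
    rintro ⟨y, hy⟩
    obtain ⟨ξ, hξα, rfl⟩ := hy
    have hmem : f ξ ∈ f '' Iio α := mem_image_of_mem f hξα
    have hval : ((e0.symm ⟨f ξ, hmem⟩ : ↥(Iio α)) : Ordinal) = ξ := by
      rw [hsymm ξ hξα]
    by_cases hlim : Order.IsSuccLimit ξ
    · rw [ContinuousAt, Filter.tendsto_def]
      intro s hs
      rw [hval] at hs
      obtain ⟨a, b, ⟨haξ, hξb⟩, hsub⟩ :=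
        (mem_nhds_iff_exists_Ioo_subset' ⟨0, hlim.pos⟩ ⟨ξ + 1, lt_add_one_ord ξ⟩).1 hs
      have ha1 : a + 1 < ξ := by
        have := hlim.succ_lt haξ; rwa [← Ordinal.add_one_eq_succ] at this
      have hW : (fun q : ↥(f '' Iio α) => q.1) ⁻¹' (Ioo (f (a+1)) (f ξ + 1))
          ∈ 𝓝 (⟨f ξ, hmem⟩ : ↥(f '' Iio α)) :=
        (isOpen_Ioo.preimage continuous_subtype_val).mem_nhds
          ⟨h1 (miic (ha1.trans hξα)) (miic hξα) ha1, lt_add_one_ord _⟩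
      refine Filter.mem_of_superset hW ?_
      rintro ⟨y', hy'⟩ ⟨hay', hy'b⟩
      obtain ⟨θ, hθα, rfl⟩ := hy'
      have hmem' : f θ ∈ f '' Iio α := mem_image_of_mem f hθα
      have h1θ : a + 1 < θ := by
        by_contra hcon
        push_neg at hcon
        exact absurd (h1.monotoneOn (miic hθα) (miic (ha1.trans hξα)) hcon) (not_le.2 hay')
      have h2θ : θ ≤ ξ := by
        have hle : f θ ≤ f ξ := le_of_lt_add_one hy'b
        by_contra hcon
        push_neg at hcon
        exact absurd (h1 (miic hξα) (miic hθα) hcon) (not_lt.2 hle)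
      show ((e0.symm ⟨f θ, hmem'⟩ : ↥(Iio α)) : Ordinal) ∈ s
      rw [hsymm θ hθα]
      show θ ∈ s
      exact hsub ⟨lt_trans (lt_add_one_ord a) h1θ, lt_of_le_of_lt h2θ hξb⟩
    · -- f ξ is isolated in the image
      obtain ⟨U, hUopen, hfU, huniq⟩ : ∃ U : Set Ordinal, IsOpen U ∧ f ξ ∈ U ∧
          ∀ θ, θ ∈ Iio α → f θ ∈ U → θ = ξ := by
        rcases Ordinal.zero_or_succ_or_isSuccLimit ξ with rfl | ⟨ζ, rfl⟩ | hlim'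
        · refine ⟨Iio (f 0 + 1), isOpen_Iio, lt_add_one_ord _, ?_⟩
          intro θ hθα hθU
          by_contra hne
          have hpos : 0 < θ := pos_iff_ne_zero.2 hne
          exact absurd (h1 m0 (miic hθα) hpos) (not_lt.2 (le_of_lt_add_one hθU))
        · have hζξ : ζ < Order.succ ζ := Order.lt_succ ζ
          refine ⟨Ioo (f ζ) (f (Order.succ ζ) + 1), isOpen_Ioo,
            ⟨h1 (miic (hζξ.trans hξα)) (miic hξα) hζξ, lt_add_one_ord _⟩, ?_⟩
          intro θ hθα hθU
          have hζθ : ζ < θ := by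
            by_contra hcon
            push_neg at hcon
            exact absurd (h1.monotoneOn (miic hθα) (miic (hζξ.trans hξα)) hcon) (not_le.2 hθU.1)
          have hθs : θ ≤ Order.succ ζ := by
            have hle : f θ ≤ f (Order.succ ζ) := le_of_lt_add_one hθU.2
            by_contra hcon
            push_neg at hcon
            exact absurd (h1 (miic hξα) (miic hθα) hcon) (not_lt.2 hle)
          exact le_antisymm hθs (Order.succ_le_of_lt hζθ)
        · exact absurd hlim' hlim
      have hVeq : (fun q : ↥(f '' Iio α) => q.1) ⁻¹' U
          = {(⟨f ξ, hmem⟩ : ↥(f '' Iio α))} := by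
        ext ⟨y', hy'⟩
        constructor
        · intro h
          obtain ⟨θ, hθα, rfl⟩ := hy'
          exact Subtype.ext (congrArg f (huniq θ hθα h))
        · intro h
          rw [Set.mem_singleton_iff, Subtype.ext_iff] at h
          show y' ∈ U
          exact (show y' = f ξ from h) ▸ hfU
      have hV : ({(⟨f ξ, hmem⟩ : ↥(f '' Iio α))} : Set ↥(f '' Iio α))
          ∈ 𝓝 (⟨f ξ, hmem⟩ : ↥(f '' Iio α)) := by
        rw [← hVeq]
        exact (hUopen.preimage continuous_subtype_val).mem_nhds hfU
      have hpure : 𝓝 (⟨f ξ, hmem⟩ : ↥(f '' Iio α)) = pure ⟨f ξ, hmem⟩ :=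
        le_antisymm (Filter.le_pure_iff.2 hV) (pure_le_nhds _)
      rw [ContinuousAt, hpure]
      exact tendsto_pure_nhds _ _
  refine ⟨⟨e0, cont1.subtype_mk _, cont2.subtype_mk _⟩, ?_⟩
  intro p q
  show p ≤ q ↔ e0 p ≤ e0 q
  simp only [← Subtype.coe_le_coe, he0app]
  exact (h1.le_iff_le (hIic p.2) (hIic q.2)).symm


def IsCopy (S : Set Ordinal.{0}) (α : Ordinal.{0}) (f : Ordinal.{0} → Ordinal.{0}) : Prop :=
  StrictMonoOn f (Iic α) ∧ (∀ ξ ≤ α, f ξ ∈ S) ∧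
    ∀ ξ ≤ α, Order.IsSuccLimit ξ → f ξ = sSup (f '' Iio ξ)

def Fset (S : Set Ordinal.{0}) (α : Ordinal.{0}) : Set Ordinal.{0} :=
  {γ | γ ∈ S ∧ ∀ β < γ, ∃ f, IsCopy S α f ∧ β < f 0 ∧ f α = γ}

theorem fset_stationary {o : Ordinal.{0}} (ho : Order.IsSuccLimit o) (hcof : ℵ₀ < o.cof)
    {S : Set Ordinal.{0}} (hSsub : S ⊆ {x : Ordinal.{0} | x < o ∧ x.cof = ℵ₀})
    (hstat : StationaryIn S o) :
    ∀ α : Ordinal.{0}, α < ω₁ → StationaryIn (Fset S α) o := by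
  intro α
  induction α using Ordinal.induction with
  | h α IH =>
  intro hα
  rcases Ordinal.zero_or_succ_or_isSuccLimit α with rfl | ⟨ξ, rfl⟩ | hlim
  · -- zero case
    apply statIn_mono _ hstat
    intro γ hγ
    refine ⟨hγ, fun β hβ => ⟨fun _ => γ, ⟨?_, fun _ _ => hγ, ?_⟩, hβ, rfl⟩⟩
    · intro x hx y hy hxy
      rw [mem_Iic, nonpos_iff_eq_zero] at hx hy
      rw [hx, hy] at hxy
      exact absurd hxy (lt_irrefl 0)
    · intro ζ hζ hl
      rw [nonpos_iff_eq_zero] at hζ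
      rw [hζ] at hl
      exact absurd hl.pos (lt_irrefl 0)
  · -- successor case
    have hξω : ξ < ω₁ := lt_trans (Order.lt_succ ξ) hα
    have hFst : StationaryIn (Fset S ξ) o := IH ξ (Order.lt_succ ξ) hξω
    have hDclub := clubIn_limPts ho hcof (statIn_unbounded ho hFst)
    apply statIn_mono _ (statIn_inter_club ho hcof hstat hDclub)
    rintro γ ⟨hγS, hγD⟩
    refine ⟨hγS, fun β hβ => ?_⟩
    obtain ⟨z, hzF, hβz, hzγ⟩ := hγD.2.2 β hβ
    obtain ⟨f, hf, hβf, hfξ⟩ := hzF.2 β hβz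
    set g : Ordinal.{0} → Ordinal.{0} := fun η => if η ≤ ξ then f η else γ with hg
    have hgval : ∀ η, η ≤ ξ → g η = f η := fun η h => if_pos h
    have hgtop : g (Order.succ ξ) = γ :=
      if_neg (fun h => absurd (Order.succ_le_iff.1 h) (lt_irrefl ξ))
    have hgmono : StrictMonoOn g (Iic (Order.succ ξ)) := by
      intro x hx y hy hxy
      rw [mem_Iic] at hx hy
      by_cases hyξ : y ≤ ξ
      · have hxξ : x ≤ ξ := le_of_lt (lt_of_lt_of_le hxy hyξ)
        rw [hgval x hxξ, hgval y hyξ]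
        exact hf.1 (mem_Iic.2 hxξ) (mem_Iic.2 hyξ) hxy
      · have hy' : y = Order.succ ξ := le_antisymm hy (Order.succ_le_of_lt (not_le.1 hyξ))
        have hxξ : x ≤ ξ := Order.lt_succ_iff.1 (hy' ▸ hxy)
        rw [hgval x hxξ, hy', hgtop]
        calc f x ≤ f ξ := hf.1.monotoneOn (mem_Iic.2 hxξ) (mem_Iic.2 le_rfl) hxξ
        _ = z := hfξ
        _ < γ := hzγ
    have hgS : ∀ η, η ≤ Order.succ ξ → g η ∈ S := by
      intro η hη
      by_cases hηξ : η ≤ ξ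
      · rw [hgval η hηξ]; exact hf.2.1 η hηξ
      · rw [hg]; simp only [if_neg hηξ]; exact hγS
    have hglim : ∀ ζ, ζ ≤ Order.succ ξ → Order.IsSuccLimit ζ → g ζ = sSup (g '' Iio ζ) := by
      intro ζ hζ hl
      have hζξ : ζ ≤ ξ := by
        rcases lt_or_eq_of_le hζ with h | h
        · exact Order.lt_succ_iff.1 h
        · exact absurd (h ▸ hl) (Order.not_isSuccLimit_succ ξ)
      rw [hgval ζ hζξ, hf.2.2 ζ hζξ hl]
      congr 1
      apply Set.image_congr
      intro η hη
      exact (hgval η (le_of_lt (lt_of_lt_of_le hη hζξ))).symm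
    refine ⟨g, ⟨hgmono, hgS, hglim⟩, ?_, hgtop⟩
    rw [hgval 0 ((zero_le (a := ξ)))]
    exact hβf
  · -- limit case
    obtain ⟨t, htmono, htlt, htcof⟩ := exists_fund_seq hlim (Iio α)
      (countable_Iio_of_lt_omega1 hα) (fun x hx => hx) (fun y hy => ⟨y, hy, le_rfl⟩)
    classical
    set a : ℕ → Ordinal.{0} := fun n => Nat.rec 0 (fun k prev => max prev (t k) + 1) n with ha
    have hasucc : ∀ k, a (k+1) = max (a k) (t k) + 1 := fun k => rfl
    have ha0 : a 0 = 0 := rfl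
    have halt : ∀ n, a n < α := by
      intro n; induction n with
      | zero => exact hlim.pos
      | succ k ih =>
        rw [hasucc]
        have h1 : max (a k) (t k) < α := max_lt ih (htlt k)
        have := hlim.succ_lt h1; rwa [← Ordinal.add_one_eq_succ] at this
    have hamono : ∀ k, a k < a (k+1) := by
      intro k; rw [hasucc]
      exact lt_of_le_of_lt (le_max_left _ _) (lt_add_one_ord _)
    have haSM : StrictMono a := strictMono_nat_of_lt_succ hamono
    have hacof : ∀ y, y < α → ∃ n, y < a (n+1) := by
      intro y hy
      obtain ⟨n, hn⟩ := htcof y hy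
      refine ⟨n, lt_of_lt_of_le hn ?_⟩
      rw [hasucc]
      exact le_of_lt (lt_of_le_of_lt (le_max_right _ _) (lt_add_one_ord _))
    have hδ : ∀ n, a n + (a (n+1) - a n) = a (n+1) :=
      fun n => Ordinal.add_sub_cancel_of_le (hamono n).le
    have hε' : ∀ n, ∃ e, a (n+1) - a n = e + 1 := by
      intro n
      rcases Ordinal.zero_or_succ_or_isSuccLimit (a (n+1) - a n) with h0 | ⟨e, he⟩ | hl
      · exfalso
        have h := hδ n; rw [h0, add_zero] at h
        exact absurd h (ne_of_lt (hamono n))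
      · exact ⟨e, by rw [← he, Ordinal.add_one_eq_succ]⟩
      · exfalso
        have h := Ordinal.isSuccLimit_add (a n) hl
        rw [hδ n, hasucc n, Ordinal.add_one_eq_succ] at h
        exact Order.not_isSuccLimit_succ _ h
    choose ε hεeq using hε'
    have hεlt : ∀ n, ε n < α := by
      intro n
      have h1 : ε n < a (n+1) - a n := by rw [hεeq n]; exact lt_add_one_ord _
      exact (h1.trans_le (Ordinal.sub_le_self _ _)).trans (halt (n+1))
    have hFn : ∀ n, StationaryIn (Fset S (ε n)) o :=
      fun n => IH (ε n) (hεlt n) ((hεlt n).trans hα)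
    set D : ℕ → Set Ordinal.{0} := fun n =>
      {x | x < o ∧ x ≠ 0 ∧ ∀ y < x, ∃ z ∈ Fset S (ε n), y < z ∧ z < x} with hDdef
    have hDclub : ∀ n, IsClubIn (D n) o :=
      fun n => clubIn_limPts ho hcof (statIn_unbounded ho (hFn n))
    have hCclub : IsClubIn (⋂ n, D n) o := clubIn_iInter ho hcof hDclub
    intro C₀ hC₀
    obtain ⟨γ, hγS, hγC, hγC₀⟩ : ∃ γ, γ ∈ S ∧ γ ∈ (⋂ n, D n) ∧ γ ∈ C₀ := by
      obtain ⟨γ, hγS, hγm⟩ := hstat _ (clubIn_inter ho hcof hCclub hC₀)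
      exact ⟨γ, hγS, hγm.1, hγm.2⟩
    refine ⟨γ, ⟨hγS, ?_⟩, hγC₀⟩
    have hγcof : γ.cof = ℵ₀ := (hSsub hγS).2
    obtain ⟨b, hbmono, hblt, hbcof⟩ := exists_seq_of_cof_omega hγcof
    intro β hβγ
    have hstep : ∀ (n : ℕ) (p : Ordinal.{0}), p < γ →
        ∃ g, IsCopy S (ε n) g ∧ p < g 0 ∧ b n < g (ε n) ∧ g (ε n) < γ := by
      intro n p hp
      have hq : max p (b n) < γ := max_lt hp (hblt n)
      have hγD := Set.mem_iInter.1 hγC n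
      obtain ⟨z, hzF, hqz, hzγ⟩ := hγD.2.2 _ hq
      obtain ⟨g, hg, hqg, hgtop⟩ := hzF.2 _ hqz
      refine ⟨g, hg, ?_, ?_, ?_⟩
      · exact lt_of_le_of_lt (le_max_left _ _) hqg
      · rw [hgtop]; exact lt_of_le_of_lt (le_max_right _ _) hqz
      · rw [hgtop]; exact hzγ
    choose pick hp1 hp2 hp3 hp4 using hstep
    set bnd : ℕ → {p : Ordinal.{0} // p < γ} := fun n =>
      Nat.rec ⟨β, hβγ⟩ (fun k prev => ⟨pick k prev.1 prev.2 (ε k), hp4 k prev.1 prev.2⟩) n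
      with hbnd
    set fam : ℕ → Ordinal.{0} → Ordinal.{0} := fun n => pick n (bnd n).1 (bnd n).2 with hfam
    have hbnds : ∀ n, (bnd (n+1)).1 = fam n (ε n) := fun n => rfl
    have hbnd0 : (bnd 0).1 = β := rfl
    have hcopy : ∀ n, IsCopy S (ε n) (fam n) := fun n => hp1 n _ _
    have hlow : ∀ n, (bnd n).1 < fam n 0 := fun n => hp2 n _ _
    have hbn : ∀ n, b n < fam n (ε n) := fun n => hp3 n _ _
    have hmaxlt : ∀ n, fam n (ε n) < γ := fun n => hp4 n _ _
    have hfam_le : ∀ n ζ, ζ ≤ ε n → fam n ζ ≤ fam n (ε n) :=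
      fun n ζ h => (hcopy n).1.monotoneOn (mem_Iic.2 h) (mem_Iic.2 le_rfl) h
    have hchain : ∀ m n, m < n → fam m (ε m) < fam n 0 := by
      intro m n hmn
      induction n with
      | zero => exact absurd hmn (Nat.not_lt_zero m)
      | succ k ih =>
        rcases Nat.lt_succ_iff_lt_or_eq.1 hmn with h | h
        · calc fam m (ε m) < fam k 0 := ih h
          _ ≤ fam k (ε k) := hfam_le k 0 ((zero_le (a := _)))
          _ < fam (k+1) 0 := by rw [← hbnds k]; exact hlow (k+1)
        · rw [h, ← hbnds k]
          exact hlow (k+1)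
    -- the glued function
    set F : Ordinal.{0} → Ordinal.{0} := fun η =>
      if hη : η < α then fam (Nat.find (hacof η hη)) (η - a (Nat.find (hacof η hη))) else γ
      with hF
    have hFα : F α = γ := by simp only [hF]; exact dif_neg (lt_irrefl α)
    have haN : ∀ (η) (hη : η < α), a (Nat.find (hacof η hη)) ≤ η := by
      intro η hη
      rcases Nat.eq_zero_or_pos (Nat.find (hacof η hη)) with h0 | hpos
      · rw [h0, ha0]; exact (zero_le (a := η))
      · obtain ⟨k, hk⟩ := Nat.exists_eq_succ_of_ne_zero hpos.ne'
        have hkk : k < Nat.find (hacof η hη) := hk ▸ Nat.lt_succ_self k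
        have h := Nat.find_min (hacof η hη) hkk
        rw [hk]
        exact not_lt.1 h
    have hNlt : ∀ (η) (hη : η < α), η < a (Nat.find (hacof η hη) + 1) :=
      fun η hη => Nat.find_spec (hacof η hη)
    have hNeq : ∀ (η) (hη : η < α) (n : ℕ), a n ≤ η → η < a (n+1) →
        Nat.find (hacof η hη) = n := by
      intro η hη n h1 h2
      apply le_antisymm
      · exact Nat.find_min' _ h2
      · by_contra hcon
        push_neg at hcon
        have h3 : a (Nat.find (hacof η hη) + 1) ≤ a n := haSM.monotone (Nat.succ_le_of_lt hcon)
        exact absurd (lt_of_lt_of_le (hNlt η hη) (h3.trans h1)) (lt_irrefl η)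
    have hFval : ∀ (n : ℕ) (η), a n ≤ η → η < a (n+1) → F η = fam n (η - a n) := by
      intro n η h1 h2
      have hη : η < α := lt_trans h2 (halt (n+1))
      simp only [hF]
      rw [dif_pos hη, hNeq η hη n h1 h2]
    have hrep : ∀ (n : ℕ) (ζ), ζ ≤ ε n → F (a n + ζ) = fam n ζ := by
      intro n ζ hζ
      have h1 : a n ≤ a n + ζ := le_self_add
      have h2 : a n + ζ < a (n+1) := by
        rw [← hδ n, hεeq n]
        exact (add_lt_add_iff_left _).2 (lt_of_le_of_lt hζ (lt_add_one_ord _))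
      rw [hFval n _ h1 h2, Ordinal.add_sub_cancel]
    have hεmem : ∀ (n : ℕ) (η), a n ≤ η → η < a (n+1) → η - a n ≤ ε n := by
      intro n η h1 h2
      have h3 : η - a n < ε n + 1 := by
        refine Ordinal.sub_lt_of_lt_add ?_ ?_
        · rw [← hεeq n, hδ n]
          exact h2
        · exact lt_of_le_of_lt ((zero_le (a := _))) (lt_add_one_ord _)
      exact le_of_lt_add_one h3
    have hFS : ∀ η, η ≤ α → F η ∈ S := by
      intro η hη
      rcases lt_or_eq_of_le hη with h | h
      · rw [hFval _ η (haN η h) (hNlt η h)]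
        exact (hcopy _).2.1 _ (hεmem _ η (haN η h) (hNlt η h))
      · rw [h, hFα]; exact hγS
    have hFlt : ∀ η, η < α → F η < γ := by
      intro η hη
      rw [hFval _ η (haN η hη) (hNlt η hη)]
      exact lt_of_le_of_lt (hfam_le _ _ (hεmem _ η (haN η hη) (hNlt η hη))) (hmaxlt _)
    have hFmono : StrictMonoOn F (Iic α) := by
      intro x hx y hy hxy
      rw [mem_Iic] at hx hy
      rcases lt_or_eq_of_le hy with hyα | hyα
      · have hxα : x < α := lt_trans hxy hyα
        obtain ⟨m, hm1, hm2, hFx⟩ : ∃ m, a m ≤ x ∧ x < a (m+1) ∧ F x = fam m (x - a m) :=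
          ⟨_, haN x hxα, hNlt x hxα, hFval _ x (haN x hxα) (hNlt x hxα)⟩
        obtain ⟨n, hn1, hn2, hFy⟩ : ∃ n, a n ≤ y ∧ y < a (n+1) ∧ F y = fam n (y - a n) :=
          ⟨_, haN y hyα, hNlt y hyα, hFval _ y (haN y hyα) (hNlt y hyα)⟩
        have hmn : m ≤ n := by
          have h : a m < a (n+1) := lt_of_le_of_lt hm1 (lt_trans hxy hn2)
          exact Nat.lt_succ_iff.1 (haSM.lt_iff_lt.1 h)
        rcases lt_or_eq_of_le hmn with hlt | heq
        · rw [hFx, hFy]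
          calc fam m (x - a m) ≤ fam m (ε m) := hfam_le m _ (hεmem m x hm1 hm2)
          _ < fam n 0 := hchain m n hlt
          _ ≤ fam n (y - a n) := (hcopy n).1.monotoneOn (mem_Iic.2 ((zero_le (a := _))))
              (mem_Iic.2 (hεmem n y hn1 hn2)) ((zero_le (a := _)))
        · subst heq
          rw [hFx, hFy]
          have hkey : x - a m < y - a m := by
            have e1 : a m + (x - a m) = x := Ordinal.add_sub_cancel_of_le hm1
            have e2 : a m + (y - a m) = y := Ordinal.add_sub_cancel_of_le hn1
            have := hxy
            rw [← e1, ← e2] at this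
            exact lt_of_add_lt_add_left this
          exact (hcopy m).1 (mem_Iic.2 (hεmem m x hm1 hm2)) (mem_Iic.2 (hεmem m y hn1 hn2)) hkey
      · rw [hyα, hFα]
        exact hFlt x (hyα ▸ hxy)
    have hFbdd : BddAbove (F '' Iio α) := by
      refine ⟨γ, ?_⟩
      rintro u ⟨η, hη, rfl⟩
      exact (hFlt η hη).le
    have hFlim : ∀ ζ, ζ ≤ α → Order.IsSuccLimit ζ → F ζ = sSup (F '' Iio ζ) := by
      intro ζ hζ hl
      rcases lt_or_eq_of_le hζ with hζα | hζα
      · -- interior limit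
        obtain ⟨n, hn1, hn2, hFζ⟩ : ∃ n, a n ≤ ζ ∧ ζ < a (n+1) ∧ F ζ = fam n (ζ - a n) :=
          ⟨_, haN ζ hζα, hNlt ζ hζα, hFval _ ζ (haN ζ hζα) (hNlt ζ hζα)⟩
        have hζn : a n + (ζ - a n) = ζ := Ordinal.add_sub_cancel_of_le hn1
        have hθlim : Order.IsSuccLimit (ζ - a n) := by
          rcases Ordinal.zero_or_succ_or_isSuccLimit (ζ - a n) with h0 | ⟨e, he⟩ | hl'
          · exfalso
            have h := hζn; rw [h0, add_zero] at h
            cases n with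
            | zero =>
              rw [← h, ha0] at hl
              exact absurd hl.pos (lt_irrefl 0)
            | succ k =>
              rw [← h, hasucc k, Ordinal.add_one_eq_succ] at hl
              exact Order.not_isSuccLimit_succ _ hl
          · exfalso
            have h := hζn
            rw [← he, Ordinal.add_succ] at h
            rw [← h] at hl
            exact Order.not_isSuccLimit_succ _ hl
          · exact hl'
        have hεn : ζ - a n ≤ ε n := hεmem n ζ hn1 hn2
        have hbdd2 : BddAbove (fam n '' Iio (ζ - a n)) := by
          refine ⟨γ, ?_⟩
          rintro u ⟨ζ', hζ', rfl⟩
          exact (lt_of_le_of_lt (hfam_le n ζ' ((le_of_lt hζ').trans hεn)) (hmaxlt n)).le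
        have hbdd1 : BddAbove (F '' Iio ζ) := by
          refine ⟨γ, ?_⟩
          rintro u ⟨η, hη, rfl⟩
          exact (hFlt η (lt_trans hη hζα)).le
        rw [hFζ, (hcopy n).2.2 _ hεn hθlim]
        apply le_antisymm
        · refine csSup_le ⟨_, ⟨0, hθlim.pos, rfl⟩⟩ ?_
          rintro u ⟨ζ', hζ', rfl⟩
          apply le_csSup hbdd1
          refine ⟨a n + ζ', ?_, hrep n ζ' ((le_of_lt hζ').trans hεn)⟩
          show a n + ζ' < ζ
          calc a n + ζ' < a n + (ζ - a n) := (add_lt_add_iff_left _).2 hζ'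
          _ = ζ := hζn
        · refine csSup_le ⟨_, ⟨0, hl.pos, rfl⟩⟩ ?_
          rintro u ⟨η, hη, rfl⟩
          by_cases hb : a n ≤ η
          · have hη2 : η < a (n+1) := lt_trans hη hn2
            rw [hFval n η hb hη2]
            apply le_csSup hbdd2
            refine ⟨η - a n, ?_, rfl⟩
            have e1 : a n + (η - a n) = η := Ordinal.add_sub_cancel_of_le hb
            have h := hη
            rw [← e1, ← hζn] at h
            show η - a n < ζ - a n
            exact lt_of_add_lt_add_left h
          · push_neg at hb
            have hηα : η < α := lt_trans hη hζα
            obtain ⟨m, hm1, hm2, hFη⟩ : ∃ m, a m ≤ η ∧ η < a (m+1) ∧ F η = fam m (η - a m) :=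
              ⟨_, haN η hηα, hNlt η hηα, hFval _ η (haN η hηα) (hNlt η hηα)⟩
            have hmn : m < n := haSM.lt_iff_lt.1 (lt_of_le_of_lt hm1 hb)
            rw [hFη]
            calc fam m (η - a m) ≤ fam m (ε m) := hfam_le m _ (hεmem m η hm1 hm2)
            _ ≤ fam n 0 := (hchain m n hmn).le
            _ ≤ sSup (fam n '' Iio (ζ - a n)) := le_csSup hbdd2 ⟨0, hθlim.pos, rfl⟩
      · -- ζ = α
        rw [hζα, hFα]
        apply le_antisymm
        · by_contra hcon
          push_neg at hcon
          obtain ⟨n, hn⟩ := hbcof _ hcon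
          have hmem : fam n (ε n) ∈ F '' Iio α := by
            refine ⟨a n + ε n, ?_, hrep n (ε n) le_rfl⟩
            show a n + ε n < α
            calc a n + ε n < a n + (ε n + 1) := (add_lt_add_iff_left _).2 (lt_add_one_ord _)
            _ = a (n+1) := by rw [← hεeq n, hδ n]
            _ < α := halt (n+1)
          have hle : fam n (ε n) ≤ sSup (F '' Iio α) := le_csSup hFbdd hmem
          exact absurd (hn.trans ((hbn n).trans_le hle)) (lt_irrefl _)
        · refine csSup_le ⟨_, ⟨0, hlim.pos, rfl⟩⟩ ?_
          rintro u ⟨η, hη, rfl⟩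
          exact (hFlt η hη).le
    -- conclude
    have h0a : (0 : Ordinal.{0}) < a (0+1) := by
      rw [hasucc 0]
      exact lt_of_le_of_lt ((zero_le (a := _))) (lt_add_one_ord _)
    have hF0 : F 0 = fam 0 0 := by
      have h := hFval 0 0 (le_of_eq ha0) h0a
      rwa [ha0, Ordinal.sub_zero] at h
    refine ⟨F, ⟨hFmono, hFS, hFlim⟩, ?_, hFα⟩
    rw [hF0]
    rw [← hbnd0]
    exact hlow 0

end Fried
end


/-- Friedman's theorem, generalized: a stationary subset of the points of countable
cofinality below a regular uncountable cardinal contains an order-homeomorphic copy of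
every countable ordinal. -/

theorem stationary_orderHomeo_copy (κ : Cardinal.{0}) (hreg : κ.IsRegular) (hunc : ℵ₀ < κ)
    (S : Set Ordinal.{0}) (hSsub : S ⊆ {x : Ordinal.{0} | x < κ.ord ∧ x.cof = ℵ₀})
    (hstat : StationaryIn S κ.ord) (α : Ordinal.{0}) (hα : α < ω₁) :
    ∃ Y ⊆ S, OrderHomeo (Iio α) Y := by
  have ho : Order.IsSuccLimit κ.ord := Cardinal.isSuccLimit_ord hreg.aleph0_le
  have hcof : ℵ₀ < κ.ord.cof := by rw [hreg.cof_eq]; exact hunc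
  have hstatF := Fried.fset_stationary ho hcof hSsub hstat α hα
  have hclub : IsClubIn (Iio κ.ord) κ.ord :=
    ⟨fun x hx => hx, fun x hx => ⟨x, hx, le_rfl⟩, fun x hx _ _ => hx⟩
  obtain ⟨γ, hγF, -⟩ := hstatF _ hclub
  have hγS : γ ∈ S := hγF.1
  have hγpos : 0 < γ := (Fried.isLimit_of_cof_omega (hSsub hγS).2).pos
  obtain ⟨f, hf, hf0, hfα⟩ := hγF.2 0 hγpos
  refine ⟨f '' Iio α, ?_, Fried.copy_orderHomeo hf.1 (fun ξ hξ hl => hf.2.2 ξ hξ.le hl)⟩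
  rintro y ⟨η, hη, rfl⟩
  exact hf.2.1 η hη.le


end
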